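/- Kadison's algebra A^e ◇ H is an associative unital algebra, i.e., the multiplication (a⊗b⊗h)(a'⊗b'⊗h') = a(h₁·a') ⊗ b'(S(h'₂)·b) ⊗ h₂h'₁ on A ⊗ A ⊗ H is associative with unit 1⊗1⊗1. -/

import Mathlib

open scoped TensorProduct
open Finset Coalgebra

section Rep

variable {k M N : Type} [CommSemiring k] [AddCommMonoid M] [AddCommMonoid N]
  [Module k M] [Module k N]

private lemma exists_range_rep (x : M ⊗[k] N) :
    ∃ (n : ℕ) (f : ℕ → M) (g : ℕ → N), x = ∑ i ∈ range n, f i ⊗ₜ[k] g i := by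
  induction x with
  | zero => exact ⟨0, 0, 0, by simp⟩
  | tmul m n => exact ⟨1, fun _ => m, fun _ => n, by simp⟩
  | add x y hx hy =>
    obtain ⟨n, f, g, hfg⟩ := hx
    obtain ⟨m, f', g', hfg'⟩ := hy
    refine ⟨n + m, fun i => if i < n then f i else f' (i - n),
      fun i => if i < n then g i else g' (i - n), ?_⟩
    rw [Finset.sum_range_add]
    have h1 : ∀ i ∈ range n, (if i < n then f i else f' (i - n)) ⊗ₜ[k]
        (if i < n then g i else g' (i - n)) = f i ⊗ₜ[k] g i := by
      intro i hi
      rw [if_pos (mem_range.mp hi), if_pos (mem_range.mp hi)]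
    have h2 : ∀ i ∈ range m, (if n + i < n then f (n + i) else f' (n + i - n)) ⊗ₜ[k]
        (if n + i < n then g (n + i) else g' (n + i - n)) = f' i ⊗ₜ[k] g' i := by
      intro i _
      rw [if_neg (by omega), if_neg (by omega), Nat.add_sub_cancel_left]
    rw [Finset.sum_congr rfl h1, Finset.sum_congr rfl h2, hfg, hfg']

lemma exists_nat_rep (x : M ⊗[k] N) :
    ∃ (s : Finset ℕ) (f : ℕ → M) (g : ℕ → N), x = ∑ i ∈ s, f i ⊗ₜ[k] g i := by
  obtain ⟨n, f, g, h⟩ := exists_range_rep x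
  exact ⟨range n, f, g, h⟩

end Rep

section Conv

variable {k C B : Type} [CommRing k] [AddCommGroup C] [Module k C] [Coalgebra k C]
  [Ring B] [Algebra k B]

open Coalgebra

noncomputable def conv (f g : C →ₗ[k] B) : C →ₗ[k] B :=
  LinearMap.mul' k B ∘ₗ TensorProduct.map f g ∘ₗ Coalgebra.comul

noncomputable def cunit : C →ₗ[k] B := Algebra.linearMap k B ∘ₗ Coalgebra.counit

lemma cunit_apply (c : C) : (cunit (k := k) (B := B)) c = Coalgebra.counit (R := k) c • 1 := by
  simp [cunit, Algebra.algebraMap_eq_smul_one]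

lemma conv_apply_repr (f g : C →ₗ[k] B) {c : C} {ι : Type*} (r : Coalgebra.Repr k c ι) :
    conv f g c = ∑ i ∈ r.index, f (r.left i) * g (r.right i) := by
  simp only [conv, LinearMap.comp_apply, ← r.eq, map_sum, TensorProduct.map_tmul,
    LinearMap.mul'_apply]

lemma conv_cunit_right (f : C →ₗ[k] B) : conv f cunit = f := by
  ext c
  have h2 := Coalgebra.sum_map_tmul_counit_eq (R := k) f c (repr := ℛ k c)
  have h3 := congrArg (TensorProduct.rid k B) h2
  simp only [map_sum, TensorProduct.rid_tmul, one_smul] at h3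
  rw [conv_apply_repr f cunit (ℛ k c)]
  simp only [cunit_apply, mul_smul_comm, mul_one]
  exact h3

lemma conv_cunit_left (f : C →ₗ[k] B) : conv cunit f = f := by
  ext c
  have h2 := Coalgebra.sum_counit_tmul_map_eq (R := k) f c (repr := ℛ k c)
  have h3 := congrArg (TensorProduct.lid k B) h2
  simp only [map_sum, TensorProduct.lid_tmul, one_smul] at h3
  rw [conv_apply_repr cunit f (ℛ k c)]
  simp only [cunit_apply, smul_mul_assoc, one_mul]
  exact h3

lemma conv_assoc (f g e : C →ₗ[k] B) : conv (conv f g) e = conv f (conv g e) := by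
  ext c
  have key := Coalgebra.sum_map_tmul_tmul_eq (R := k) f g e c (repr := ℛ k c)
    (a₁ := fun i => ℛ k ((ℛ k c).left i)) (a₂ := fun i => ℛ k ((ℛ k c).right i))
  have key2 := congrArg (LinearMap.mul' k B ∘ₗ LinearMap.lTensor B (LinearMap.mul' k B)) key
  simp only [map_sum, LinearMap.comp_apply, LinearMap.lTensor_tmul, LinearMap.mul'_apply] at key2
  rw [conv_apply_repr (conv f g) e (ℛ k c), conv_apply_repr f (conv g e) (ℛ k c)]
  calc ∑ i ∈ (ℛ k c).index, conv f g ((ℛ k c).left i) * e ((ℛ k c).right i)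
      = ∑ i ∈ (ℛ k c).index, ∑ j ∈ (ℛ k ((ℛ k c).left i)).index,
          f ((ℛ k ((ℛ k c).left i)).left j) * (g ((ℛ k ((ℛ k c).left i)).right j) *
            e ((ℛ k c).right i)) := by
        refine Finset.sum_congr rfl fun i _ => ?_
        rw [conv_apply_repr f g (ℛ k ((ℛ k c).left i)), Finset.sum_mul]
        exact Finset.sum_congr rfl fun j _ => (mul_assoc _ _ _)
    _ = ∑ i ∈ (ℛ k c).index, ∑ j ∈ (ℛ k ((ℛ k c).right i)).index,
          f ((ℛ k c).left i) * (g ((ℛ k ((ℛ k c).right i)).left j) *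
            e ((ℛ k ((ℛ k c).right i)).right j)) := key2.symm
    _ = ∑ i ∈ (ℛ k c).index, f ((ℛ k c).left i) * conv g e ((ℛ k c).right i) := by
        refine Finset.sum_congr rfl fun i _ => ?_
        rw [conv_apply_repr g e (ℛ k ((ℛ k c).right i)), Finset.mul_sum]

lemma conv_inv_unique {f d g : C →ₗ[k] B} (h1 : conv f d = cunit) (h2 : conv d g = cunit) :
    f = g := by
  calc f = conv f cunit := (conv_cunit_right f).symm
    _ = conv f (conv d g) := by rw [h2]
    _ = conv (conv f d) g := (conv_assoc f d g).symm
    _ = conv cunit g := by rw [h1]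
    _ = g := conv_cunit_left g

end Conv

section Hopf
variable {k H : Type} [CommRing k] [Ring H] [HopfAlgebra k H]

local notation "S" => HopfAlgebra.antipode (R := k) (A := H)

/-- Repr of a tensor product element in the tensor-product coalgebra. -/
noncomputable def tensorRepr {x y : H} {ι κ : Type*} (rx : Coalgebra.Repr k x ι) (ry : Coalgebra.Repr k y κ) :
    Coalgebra.Repr k (x ⊗ₜ[k] y) (ι × κ) where
  index := rx.index ×ˢ ry.index
  left := fun p => rx.left p.1 ⊗ₜ[k] ry.left p.2
  right := fun p => rx.right p.1 ⊗ₜ[k] ry.right p.2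
  eq := by
    rw [Finset.sum_product]
    have : Coalgebra.comul (R := k) (x ⊗ₜ[k] y) =
        TensorProduct.tensorTensorTensorComm k H H H H
          (Coalgebra.comul (R := k) x ⊗ₜ[k] Coalgebra.comul (R := k) y) := by
      rw [TensorProduct.comul_tmul]; rfl
    rw [this, ← rx.eq, ← ry.eq, TensorProduct.sum_tmul, map_sum]
    refine Finset.sum_congr rfl fun i _ => ?_
    rw [TensorProduct.tmul_sum, map_sum]
    exact Finset.sum_congr rfl fun j _ => TensorProduct.tensorTensorTensorComm_tmul ..

/-- Repr of a product in a bialgebra. -/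
noncomputable def mulRepr {x y : H} {ι κ : Type*} (rx : Coalgebra.Repr k x ι) (ry : Coalgebra.Repr k y κ) :
    Coalgebra.Repr k (x * y) (ι × κ) where
  index := rx.index ×ˢ ry.index
  left := fun p => rx.left p.1 * ry.left p.2
  right := fun p => rx.right p.1 * ry.right p.2
  eq := by
    rw [Finset.sum_product, Bialgebra.comul_mul, ← rx.eq, ← ry.eq, Finset.sum_mul_sum]
    refine Finset.sum_congr rfl fun i _ => Finset.sum_congr rfl fun j _ => ?_
    exact (Algebra.TensorProduct.tmul_mul_tmul ..).symm

@[simp] lemma tensorRepr_index {x y : H} {ι κ : Type*} (rx : Coalgebra.Repr k x ι) (ry : Coalgebra.Repr k y κ) :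
    (tensorRepr rx ry).index = rx.index ×ˢ ry.index := rfl

@[simp] lemma tensorRepr_left {x y : H} {ι κ : Type*} (rx : Coalgebra.Repr k x ι) (ry : Coalgebra.Repr k y κ)
    (p : ι × κ) : (tensorRepr rx ry).left p = rx.left p.1 ⊗ₜ[k] ry.left p.2 := rfl

@[simp] lemma tensorRepr_right {x y : H} {ι κ : Type*} (rx : Coalgebra.Repr k x ι) (ry : Coalgebra.Repr k y κ)
    (p : ι × κ) : (tensorRepr rx ry).right p = rx.right p.1 ⊗ₜ[k] ry.right p.2 := rfl

@[simp] lemma mulRepr_index {x y : H} {ι κ : Type*} (rx : Coalgebra.Repr k x ι) (ry : Coalgebra.Repr k y κ) :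
    (mulRepr rx ry).index = rx.index ×ˢ ry.index := rfl

@[simp] lemma mulRepr_left {x y : H} {ι κ : Type*} (rx : Coalgebra.Repr k x ι) (ry : Coalgebra.Repr k y κ)
    (p : ι × κ) : (mulRepr rx ry).left p = rx.left p.1 * ry.left p.2 := rfl

@[simp] lemma mulRepr_right {x y : H} {ι κ : Type*} (rx : Coalgebra.Repr k x ι) (ry : Coalgebra.Repr k y κ)
    (p : ι × κ) : (mulRepr rx ry).right p = rx.right p.1 * ry.right p.2 := rfl

lemma counit_tmul (x y : H) :
    Coalgebra.counit (R := k) (x ⊗ₜ[k] y) =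
      Coalgebra.counit (R := k) x * Coalgebra.counit (R := k) y := by
  rw [TensorProduct.counit_tmul, smul_eq_mul, mul_comm]

lemma S_one : S 1 = 1 := by
  have := HopfAlgebra.sum_antipode_mul_eq_smul (R := k) (A := H)
    (⟨({0} : Finset ℕ), fun _ => 1, fun _ => 1, by
      simp [Bialgebra.comul_one, Algebra.TensorProduct.one_def]⟩ : Coalgebra.Repr k (1 : H) ℕ)
  simpa using this

lemma counit_S (h : H) : Coalgebra.counit (R := k) (S h) = Coalgebra.counit (R := k) h := by
  set r := ℛ k h
  have hsum : ∑ i ∈ r.index, Coalgebra.counit (R := k) (r.right i) • r.left i = h := by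
    have h2 := Coalgebra.sum_tmul_counit_eq (R := k) r
    have h3 := congrArg (TensorProduct.rid k H) h2
    simpa only [map_sum, TensorProduct.rid_tmul, one_smul] using h3
  conv_lhs => rw [← hsum]
  rw [map_sum, map_sum]
  have : ∑ i ∈ r.index, Coalgebra.counit (R := k) (S (Coalgebra.counit (R := k) (r.right i) • r.left i))
      = Coalgebra.counit (R := k) (∑ i ∈ r.index, S (r.left i) * r.right i) := by
    rw [map_sum]
    refine Finset.sum_congr rfl fun i _ => ?_
    rw [map_smul, map_smul, smul_eq_mul, Bialgebra.counit_mul, mul_comm]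
  rw [this, HopfAlgebra.sum_antipode_mul_eq_smul r, map_smul, smul_eq_mul,
    Bialgebra.counit_one, mul_one]

lemma S_mul_map : (S ∘ₗ LinearMap.mul' k H) =
    LinearMap.mul' k H ∘ₗ TensorProduct.map S S ∘ₗ (TensorProduct.comm k H H).toLinearMap := by
  refine conv_inv_unique (d := LinearMap.mul' k H) ?_ ?_
  · apply TensorProduct.ext'
    intro x y
    rw [conv_apply_repr _ _ (tensorRepr (ℛ k x) (ℛ k y))]
    have key := HopfAlgebra.sum_antipode_mul_eq_smul (R := k) (mulRepr (ℛ k x) (ℛ k y))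
    simp only [mulRepr_index, mulRepr_left, mulRepr_right] at key
    simp only [tensorRepr_index, tensorRepr_left, tensorRepr_right, LinearMap.comp_apply,
      LinearMap.mul'_apply]
    refine key.trans ?_
    rw [cunit_apply, counit_tmul, Bialgebra.counit_mul]
  · apply TensorProduct.ext'
    intro x y
    rw [conv_apply_repr _ _ (tensorRepr (ℛ k x) (ℛ k y)), cunit_apply, counit_tmul]
    simp only [tensorRepr_index, tensorRepr_left, tensorRepr_right, LinearMap.comp_apply,
      LinearMap.mul'_apply, LinearEquiv.coe_coe, TensorProduct.comm_tmul, TensorProduct.map_tmul]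
    refine Eq.trans (Finset.sum_product _ _ _) ?_
    have step : ∀ i ∈ (ℛ k x).index, (∑ j ∈ (ℛ k y).index,
        ((ℛ k x).left i * (ℛ k y).left j) * (S ((ℛ k y).right j) * S ((ℛ k x).right i)))
        = Coalgebra.counit (R := k) y • ((ℛ k x).left i * S ((ℛ k x).right i)) := by
      intro i _
      have e : ∀ j ∈ (ℛ k y).index,
          ((ℛ k x).left i * (ℛ k y).left j) * (S ((ℛ k y).right j) * S ((ℛ k x).right i))
          = (ℛ k x).left i * (((ℛ k y).left j * S ((ℛ k y).right j)) * S ((ℛ k x).right i)) := by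
        intro j _; rw [mul_assoc, mul_assoc]
      rw [Finset.sum_congr rfl e, ← Finset.mul_sum, ← Finset.sum_mul,
        HopfAlgebra.sum_mul_antipode_eq_smul (ℛ k y), smul_mul_assoc, one_mul, mul_smul_comm]
    rw [Finset.sum_congr rfl step, ← Finset.smul_sum,
      HopfAlgebra.sum_mul_antipode_eq_smul (ℛ k x), smul_smul, mul_comm]

lemma S_mul (x y : H) : S (x * y) = S y * S x := by
  have := congrArg (fun f => f (x ⊗ₜ[k] y)) S_mul_map
  simpa using this

end Hopf

section UC
variable {k M N P Q T : Type} [CommRing k] [AddCommGroup M] [AddCommGroup N] [AddCommGroup P]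
  [AddCommGroup Q] [AddCommGroup T] [Module k M] [Module k N] [Module k P] [Module k Q]
  [Module k T]

noncomputable def uc3 (φ : M →ₗ[k] N →ₗ[k] P →ₗ[k] T) : M ⊗[k] (N ⊗[k] P) →ₗ[k] T :=
  TensorProduct.lift ((TensorProduct.lift.equiv (RingHom.id k) N P T).toLinearMap ∘ₗ φ)

@[simp] lemma uc3_tmul (φ : M →ₗ[k] N →ₗ[k] P →ₗ[k] T) (m : M) (n : N) (p : P) :
    uc3 φ (m ⊗ₜ[k] (n ⊗ₜ[k] p)) = φ m n p := by
  simp [uc3, TensorProduct.lift.equiv]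

noncomputable def uc4 (φ : M →ₗ[k] N →ₗ[k] P →ₗ[k] Q →ₗ[k] T) :
    M ⊗[k] (N ⊗[k] (P ⊗[k] Q)) →ₗ[k] T :=
  uc3 ((LinearMap.llcomp k N (P →ₗ[k] Q →ₗ[k] T) (P ⊗[k] Q →ₗ[k] T)
    (TensorProduct.lift.equiv (RingHom.id k) P Q T).toLinearMap) ∘ₗ φ)

@[simp] lemma uc4_tmul (φ : M →ₗ[k] N →ₗ[k] P →ₗ[k] Q →ₗ[k] T) (m : M) (n : N) (p : P) (q : Q) :
    uc4 φ (m ⊗ₜ[k] (n ⊗ₜ[k] (p ⊗ₜ[k] q))) = φ m n p q := by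
  simp [uc4, TensorProduct.lift.equiv]

end UC

section Hopf2
variable {k H : Type} [CommRing k] [Ring H] [HopfAlgebra k H]

local notation "S" => HopfAlgebra.antipode (R := k) (A := H)

/-- The 4-linear map `(a,b,c,d) ↦ (a * S d) ⊗ (b * S c)`. -/
noncomputable def cLam : H →ₗ[k] H →ₗ[k] H →ₗ[k] H →ₗ[k] (H ⊗[k] H) :=
  LinearMap.mk₂ k (fun a b => LinearMap.mk₂ k (fun c d => (a * S d) ⊗ₜ[k] (b * S c))
      (fun c₁ c₂ d => by simp [map_add, mul_add, TensorProduct.tmul_add])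
      (fun t c d => by simp [map_smul, mul_smul_comm, TensorProduct.tmul_smul])
      (fun c d₁ d₂ => by simp [map_add, mul_add, TensorProduct.add_tmul])
      (fun t c d => by simp [map_smul, mul_smul_comm, TensorProduct.smul_tmul']))
    (fun a₁ a₂ b => by
      ext c d; simp [LinearMap.mk₂_apply, add_mul, TensorProduct.add_tmul]; rfl)
    (fun t a b => by
      ext c d; simp [LinearMap.mk₂_apply, smul_mul_assoc, TensorProduct.smul_tmul']
      rw [← TensorProduct.smul_tmul']; rfl)
    (fun a b₁ b₂ => by
      ext c d; simp [LinearMap.mk₂_apply, add_mul, TensorProduct.tmul_add]; rfl)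
    (fun t a b => by
      ext c d; simp [LinearMap.mk₂_apply, smul_mul_assoc, TensorProduct.tmul_smul, TensorProduct.smul_tmul]; rfl)

@[simp] lemma cLam_apply (a b c d : H) :
    cLam a b c d = (a * S d) ⊗ₜ[k] (b * S c) := rfl

lemma comul_S_map : (Coalgebra.comul ∘ₗ S : H →ₗ[k] H ⊗[k] H) =
    (TensorProduct.comm k H H).toLinearMap ∘ₗ TensorProduct.map S S ∘ₗ Coalgebra.comul := by
  refine conv_inv_unique (d := (Coalgebra.comul : H →ₗ[k] H ⊗[k] H)) ?_ ?_
  · ext h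
    rw [conv_apply_repr _ _ (ℛ k h), cunit_apply]
    have e : ∀ i ∈ (ℛ k h).index,
        (Coalgebra.comul ∘ₗ S) ((ℛ k h).left i) * Coalgebra.comul ((ℛ k h).right i)
        = Coalgebra.comul (R := k) (S ((ℛ k h).left i) * (ℛ k h).right i) := by
      intro i _
      rw [Bialgebra.comul_mul]; rfl
    rw [Finset.sum_congr rfl e, ← map_sum, HopfAlgebra.sum_antipode_mul_eq_smul (ℛ k h),
      map_smul, Bialgebra.comul_one]
  · ext h
    set r := ℛ k h with hr
    rw [conv_apply_repr _ _ r, cunit_apply]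
    -- expand each summand into a triple sum
    have expand : ∀ i ∈ r.index,
        Coalgebra.comul (R := k) (r.left i) *
          (((TensorProduct.comm k H H).toLinearMap ∘ₗ TensorProduct.map S S ∘ₗ
            Coalgebra.comul) (r.right i))
        = ∑ j ∈ (ℛ k (r.left i)).index, ∑ m ∈ (ℛ k (r.right i)).index,
            ((ℛ k (r.left i)).left j * S ((ℛ k (r.right i)).right m)) ⊗ₜ[k]
              ((ℛ k (r.left i)).right j * S ((ℛ k (r.right i)).left m)) := by
      intro i _
      rw [← (ℛ k (r.left i)).eq]
      have : ((TensorProduct.comm k H H).toLinearMap ∘ₗ TensorProduct.map S S ∘ₗ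
          Coalgebra.comul) (r.right i)
          = ∑ m ∈ (ℛ k (r.right i)).index,
              S ((ℛ k (r.right i)).right m) ⊗ₜ[k] S ((ℛ k (r.right i)).left m) := by
        simp only [LinearMap.comp_apply, ← (ℛ k (r.right i)).eq, map_sum,
          TensorProduct.map_tmul, LinearEquiv.coe_coe, TensorProduct.comm_tmul]
      rw [this, Finset.sum_mul_sum]
      exact Finset.sum_congr rfl fun j _ => Finset.sum_congr rfl fun m _ =>
        Algebra.TensorProduct.tmul_mul_tmul ..
    rw [Finset.sum_congr rfl expand]
    -- rewrite as Λ applied to the 4-fold tensor T_A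
    have hTA : ∀ i ∈ r.index, ∑ j ∈ (ℛ k (r.left i)).index, ∑ m ∈ (ℛ k (r.right i)).index,
        ((ℛ k (r.left i)).left j * S ((ℛ k (r.right i)).right m)) ⊗ₜ[k]
          ((ℛ k (r.left i)).right j * S ((ℛ k (r.right i)).left m))
        = uc4 cLam (∑ j ∈ (ℛ k (r.left i)).index, ∑ m ∈ (ℛ k (r.right i)).index,
            (ℛ k (r.left i)).left j ⊗ₜ[k] ((ℛ k (r.left i)).right j ⊗ₜ[k]
              ((ℛ k (r.right i)).left m ⊗ₜ[k] (ℛ k (r.right i)).right m))) := by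
      intro i _
      rw [map_sum]
      refine Finset.sum_congr rfl fun j _ => ?_
      rw [map_sum]
      refine Finset.sum_congr rfl fun m _ => ?_
      rw [uc4_tmul, cLam_apply]
    rw [Finset.sum_congr rfl hTA, ← map_sum]
    -- T_A = T_C via outer coassociativity (applied under `id ⊗ id ⊗ comul`)
    have E1 := Coalgebra.sum_tmul_tmul_eq (R := k) r (fun i => ℛ k (r.left i))
      (fun i => ℛ k (r.right i))
    have hAC := congrArg (LinearMap.lTensor H (LinearMap.lTensor H
      (Coalgebra.comul (R := k) (A := H)))) E1
    simp only [map_sum, LinearMap.lTensor_tmul] at hAC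
    -- expand comul's inside hAC
    have hACl : ∑ i ∈ r.index, ∑ j ∈ (ℛ k (r.left i)).index,
        (ℛ k (r.left i)).left j ⊗ₜ[k] ((ℛ k (r.left i)).right j ⊗ₜ[k]
          Coalgebra.comul (R := k) (r.right i))
        = ∑ i ∈ r.index, ∑ j ∈ (ℛ k (r.left i)).index, ∑ m ∈ (ℛ k (r.right i)).index,
            (ℛ k (r.left i)).left j ⊗ₜ[k] ((ℛ k (r.left i)).right j ⊗ₜ[k]
              ((ℛ k (r.right i)).left m ⊗ₜ[k] (ℛ k (r.right i)).right m)) := by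
      refine Finset.sum_congr rfl fun i _ => Finset.sum_congr rfl fun j _ => ?_
      rw [← (ℛ k (r.right i)).eq, TensorProduct.tmul_sum, TensorProduct.tmul_sum]
    have hACr : ∑ i ∈ r.index, ∑ m ∈ (ℛ k (r.right i)).index,
        r.left i ⊗ₜ[k] ((ℛ k (r.right i)).left m ⊗ₜ[k]
          Coalgebra.comul (R := k) ((ℛ k (r.right i)).right m))
        = ∑ i ∈ r.index, ∑ m ∈ (ℛ k (r.right i)).index,
            ∑ w ∈ (ℛ k ((ℛ k (r.right i)).right m)).index,
            r.left i ⊗ₜ[k] ((ℛ k (r.right i)).left m ⊗ₜ[k]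
              ((ℛ k ((ℛ k (r.right i)).right m)).left w ⊗ₜ[k]
                (ℛ k ((ℛ k (r.right i)).right m)).right w)) := by
      refine Finset.sum_congr rfl fun i _ => Finset.sum_congr rfl fun m _ => ?_
      rw [← (ℛ k ((ℛ k (r.right i)).right m)).eq, TensorProduct.tmul_sum,
        TensorProduct.tmul_sum]
    rw [hACl, hACr] at hAC
    -- T_B = T_C via inner coassociativity, tensored with r.left i
    have hBC : ∑ i ∈ r.index, ∑ m ∈ (ℛ k (r.right i)).index,
        ∑ q ∈ (ℛ k ((ℛ k (r.right i)).left m)).index,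
          r.left i ⊗ₜ[k] ((ℛ k ((ℛ k (r.right i)).left m)).left q ⊗ₜ[k]
            ((ℛ k ((ℛ k (r.right i)).left m)).right q ⊗ₜ[k] (ℛ k (r.right i)).right m))
        = ∑ i ∈ r.index, ∑ m ∈ (ℛ k (r.right i)).index,
            ∑ w ∈ (ℛ k ((ℛ k (r.right i)).right m)).index,
            r.left i ⊗ₜ[k] ((ℛ k (r.right i)).left m ⊗ₜ[k]
              ((ℛ k ((ℛ k (r.right i)).right m)).left w ⊗ₜ[k]
                (ℛ k ((ℛ k (r.right i)).right m)).right w)) := by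
      refine Finset.sum_congr rfl fun i _ => ?_
      have E2 := Coalgebra.sum_tmul_tmul_eq (R := k) (ℛ k (r.right i))
        (fun m => ℛ k ((ℛ k (r.right i)).left m)) (fun m => ℛ k ((ℛ k (r.right i)).right m))
      have := congrArg (fun z => (TensorProduct.mk k H (H ⊗[k] (H ⊗[k] H)) (r.left i)) z) E2
      simp only [map_sum, TensorProduct.mk_apply] at this
      simpa using this
    rw [hAC, ← hBC, map_sum]
    -- now collapse
    have collapse : ∀ i ∈ r.index,
        uc4 cLam (∑ m ∈ (ℛ k (r.right i)).index,
          ∑ q ∈ (ℛ k ((ℛ k (r.right i)).left m)).index,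
            r.left i ⊗ₜ[k] ((ℛ k ((ℛ k (r.right i)).left m)).left q ⊗ₜ[k]
              ((ℛ k ((ℛ k (r.right i)).left m)).right q ⊗ₜ[k] (ℛ k (r.right i)).right m)))
        = (r.left i * S (r.right i)) ⊗ₜ[k] (1 : H) := by
      intro i _
      rw [map_sum]
      have inner : ∀ m ∈ (ℛ k (r.right i)).index,
          uc4 cLam (∑ q ∈ (ℛ k ((ℛ k (r.right i)).left m)).index,
            r.left i ⊗ₜ[k] ((ℛ k ((ℛ k (r.right i)).left m)).left q ⊗ₜ[k]
              ((ℛ k ((ℛ k (r.right i)).left m)).right q ⊗ₜ[k] (ℛ k (r.right i)).right m)))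
          = Coalgebra.counit (R := k) ((ℛ k (r.right i)).left m) •
              ((r.left i * S ((ℛ k (r.right i)).right m)) ⊗ₜ[k] (1 : H)) := by
        intro m _
        rw [map_sum]
        have e : ∀ q ∈ (ℛ k ((ℛ k (r.right i)).left m)).index,
            uc4 cLam (r.left i ⊗ₜ[k] ((ℛ k ((ℛ k (r.right i)).left m)).left q ⊗ₜ[k]
              ((ℛ k ((ℛ k (r.right i)).left m)).right q ⊗ₜ[k] (ℛ k (r.right i)).right m)))
            = (r.left i * S ((ℛ k (r.right i)).right m)) ⊗ₜ[k]
                ((ℛ k ((ℛ k (r.right i)).left m)).left q *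
                  S ((ℛ k ((ℛ k (r.right i)).left m)).right q)) := by
          intro q _
          rw [uc4_tmul, cLam_apply]
        rw [Finset.sum_congr rfl e, ← TensorProduct.tmul_sum,
          HopfAlgebra.sum_mul_antipode_eq_smul (ℛ k ((ℛ k (r.right i)).left m))]
        simp
      rw [Finset.sum_congr rfl inner]
      have key : ∑ m ∈ (ℛ k (r.right i)).index,
          Coalgebra.counit (R := k) ((ℛ k (r.right i)).left m) • (ℛ k (r.right i)).right m
          = r.right i := by
        have h2 := Coalgebra.sum_counit_tmul_eq (R := k) (ℛ k (r.right i))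
        have h3 := congrArg (TensorProduct.lid k H) h2
        simpa only [map_sum, TensorProduct.lid_tmul, one_smul] using h3
      have := congrArg (((TensorProduct.mk k H H).flip (1 : H)) ∘ₗ
        LinearMap.mulLeft k (r.left i) ∘ₗ S) key
      simp only [map_sum, map_smul, LinearMap.comp_apply, LinearMap.flip_apply,
        TensorProduct.mk_apply, LinearMap.mulLeft_apply] at this
      exact this
    rw [Finset.sum_congr rfl collapse, ← TensorProduct.sum_tmul,
      HopfAlgebra.sum_mul_antipode_eq_smul r]
    simp [Algebra.TensorProduct.one_def, TensorProduct.smul_tmul']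

end Hopf2

section PairSum

lemma pair_sum {M : Type} [AddCommMonoid M] (s t : Finset ℕ) (F : ℕ → ℕ → M) :
    ∑ n ∈ (s ×ˢ t).image (fun p => Nat.pair p.1 p.2), F n.unpair.1 n.unpair.2
      = ∑ i ∈ s, ∑ j ∈ t, F i j := by
  rw [Finset.sum_image (by
    intro p _ q _ hpq
    have := Nat.pair_eq_pair.mp hpq
    exact Prod.ext this.1 this.2)]
  simp only [Nat.unpair_pair]
  exact Finset.sum_product _ _ _

end PairSum

section MainReps

variable {k H : Type} [CommRing k] [Ring H] [HopfAlgebra k H]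
  (Δs : H → Finset ℕ) (Δ1 Δ2 : H → ℕ → H)
  (hΔ : ∀ x : H, Coalgebra.comul (R := k) x = ∑ i ∈ Δs x, Δ1 x i ⊗ₜ[k] Δ2 x i)

local notation "S" => HopfAlgebra.antipode (R := k) (A := H)

include hΔ

lemma comul_mul_rep (x y : H) :
    Coalgebra.comul (R := k) (x * y) =
      ∑ n ∈ (Δs x ×ˢ Δs y).image (fun p => Nat.pair p.1 p.2),
        (Δ1 x n.unpair.1 * Δ1 y n.unpair.2) ⊗ₜ[k] (Δ2 x n.unpair.1 * Δ2 y n.unpair.2) := by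
  refine Eq.trans ?_ (pair_sum (Δs x) (Δs y)
    (fun i j => (Δ1 x i * Δ1 y j) ⊗ₜ[k] (Δ2 x i * Δ2 y j))).symm
  rw [Bialgebra.comul_mul, hΔ x, hΔ y, Finset.sum_mul_sum]
  exact Finset.sum_congr rfl fun i _ => Finset.sum_congr rfl fun j _ =>
    Algebra.TensorProduct.tmul_mul_tmul ..

lemma comul_S_rep (x : H) :
    Coalgebra.comul (R := k) (S x) = ∑ i ∈ Δs x, S (Δ2 x i) ⊗ₜ[k] S (Δ1 x i) := by
  have e := congrArg (fun f : H →ₗ[k] H ⊗[k] H => f x) (comul_S_map (k := k) (H := H))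
  simp only [LinearMap.comp_apply] at e
  rw [e, hΔ x, map_sum, map_sum]
  exact Finset.sum_congr rfl fun i _ => by
    simp only [TensorProduct.map_tmul, LinearEquiv.coe_coe, TensorProduct.comm_tmul]

lemma coassoc_rep (x : H) :
    ∑ i ∈ Δs x, ∑ q ∈ Δs (Δ2 x i),
        Δ1 x i ⊗ₜ[k] (Δ1 (Δ2 x i) q ⊗ₜ[k] Δ2 (Δ2 x i) q)
      = ∑ i ∈ Δs x, ∑ q ∈ Δs (Δ1 x i),
        Δ1 (Δ1 x i) q ⊗ₜ[k] (Δ2 (Δ1 x i) q ⊗ₜ[k] Δ2 x i) := by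
  have e := Coalgebra.coassoc_apply (R := k) x
  rw [hΔ x] at e
  simp only [map_sum] at e
  calc ∑ i ∈ Δs x, ∑ q ∈ Δs (Δ2 x i), Δ1 x i ⊗ₜ[k] (Δ1 (Δ2 x i) q ⊗ₜ[k] Δ2 (Δ2 x i) q)
      = ∑ i ∈ Δs x, LinearMap.lTensor H (Coalgebra.comul (R := k))
          (Δ1 x i ⊗ₜ[k] Δ2 x i) := by
        refine Finset.sum_congr rfl fun i _ => ?_
        rw [LinearMap.lTensor_tmul, hΔ (Δ2 x i), TensorProduct.tmul_sum]
    _ = ∑ i ∈ Δs x, TensorProduct.assoc k H H H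
          (LinearMap.rTensor H (Coalgebra.comul (R := k)) (Δ1 x i ⊗ₜ[k] Δ2 x i)) := e.symm
    _ = ∑ i ∈ Δs x, ∑ q ∈ Δs (Δ1 x i),
          Δ1 (Δ1 x i) q ⊗ₜ[k] (Δ2 (Δ1 x i) q ⊗ₜ[k] Δ2 x i) := by
        refine Finset.sum_congr rfl fun i _ => ?_
        rw [LinearMap.rTensor_tmul, hΔ (Δ1 x i), TensorProduct.sum_tmul, map_sum]
        exact Finset.sum_congr rfl fun q _ => by
          rw [TensorProduct.assoc_tmul]

lemma counit_right_rep (x : H) :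
    ∑ i ∈ Δs x, Coalgebra.counit (R := k) (Δ2 x i) • Δ1 x i = x := by
  have e := Coalgebra.lTensor_counit_comul (R := k) x
  rw [hΔ x, map_sum] at e
  have e2 := congrArg (TensorProduct.rid k H) e
  simpa only [map_sum, LinearMap.lTensor_tmul, TensorProduct.rid_tmul, one_smul] using e2

lemma counit_left_rep (x : H) :
    ∑ i ∈ Δs x, Coalgebra.counit (R := k) (Δ1 x i) • Δ2 x i = x := by
  have e := Coalgebra.rTensor_counit_comul (R := k) x
  rw [hΔ x, map_sum] at e
  have e2 := congrArg (TensorProduct.lid k H) e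
  simpa only [map_sum, LinearMap.rTensor_tmul, TensorProduct.lid_tmul, one_smul] using e2

end MainReps

section Tri

variable {k H A : Type} [CommRing k] [Ring H] [HopfAlgebra k H] [Ring A] [Algebra k A]

local notation "S" => HopfAlgebra.antipode (R := k) (A := H)

/-- `(v₁,v₂,v₃) ↦ (B v₁ v₂ ⊗ c) ⊗ ρ v₃`. -/
noncomputable def triA (B : H →ₗ[k] H →ₗ[k] A) (c : A) (ρ : H →ₗ[k] H) :
    H →ₗ[k] H →ₗ[k] H →ₗ[k] (A ⊗[k] A) ⊗[k] H :=
  B.compr₂ ((LinearMap.lcomp k _ ρ) ∘ₗ (TensorProduct.mk k (A ⊗[k] A) H) ∘ₗ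
    ((TensorProduct.mk k A A).flip c))

@[simp] lemma triA_apply (B : H →ₗ[k] H →ₗ[k] A) (c : A) (ρ : H →ₗ[k] H) (v₁ v₂ v₃ : H) :
    triA B c ρ v₁ v₂ v₃ = ((B v₁ v₂) ⊗ₜ[k] c) ⊗ₜ[k] ρ v₃ := rfl

/-- `(v₁,v₂,v₃) ↦ (p v₁ ⊗ q v₃) ⊗ ρ v₂`. -/
noncomputable def triB (p q : H →ₗ[k] A) (ρ : H →ₗ[k] H) :
    H →ₗ[k] H →ₗ[k] H →ₗ[k] (A ⊗[k] A) ⊗[k] H :=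
  LinearMap.mk₂ k
    (fun v₁ v₂ => ((TensorProduct.mk k (A ⊗[k] A) H).flip (ρ v₂)) ∘ₗ
      (TensorProduct.mk k A A (p v₁)) ∘ₗ q)
    (fun v v' w => by ext u; simp [TensorProduct.add_tmul])
    (fun t v w => by ext u; simp [TensorProduct.smul_tmul'])
    (fun v w w' => by ext u; simp [TensorProduct.tmul_add])
    (fun t v w => by ext u; simp [TensorProduct.tmul_smul])

@[simp] lemma triB_apply (p q : H →ₗ[k] A) (ρ : H →ₗ[k] H) (v₁ v₂ v₃ : H) :
    triB p q ρ v₁ v₂ v₃ = ((p v₁) ⊗ₜ[k] (q v₃)) ⊗ₜ[k] ρ v₂ := rfl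

/-- `(v₁,v₂,v₃) ↦ (c ⊗ B v₂ v₃) ⊗ ρ v₁`. -/
noncomputable def triC (c : A) (B : H →ₗ[k] H →ₗ[k] A) (ρ : H →ₗ[k] H) :
    H →ₗ[k] H →ₗ[k] H →ₗ[k] (A ⊗[k] A) ⊗[k] H :=
  LinearMap.mk₂ k
    (fun v₁ v₂ => ((TensorProduct.mk k (A ⊗[k] A) H).flip (ρ v₁)) ∘ₗ
      (TensorProduct.mk k A A c) ∘ₗ (B v₂))
    (fun v v' w => by ext u; simp [TensorProduct.add_tmul])
    (fun t v w => by ext u; simp [TensorProduct.smul_tmul'])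
    (fun v w w' => by ext u; simp [TensorProduct.tmul_add])
    (fun t v w => by ext u; simp [TensorProduct.tmul_smul])

@[simp] lemma triC_apply (c : A) (B : H →ₗ[k] H →ₗ[k] A) (ρ : H →ₗ[k] H) (v₁ v₂ v₃ : H) :
    triC c B ρ v₁ v₂ v₃ = (c ⊗ₜ[k] (B v₂ v₃)) ⊗ₜ[k] ρ v₁ := rfl

variable (l : H →ₗ[k] A →ₗ[k] A)

/-- `(x₁,x₂) ↦ a * l x₁ a' * l x₂ c`. -/
noncomputable def bilA (a a' c : A) : H →ₗ[k] H →ₗ[k] A :=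
  LinearMap.mk₂ k (fun x₁ x₂ => a * l x₁ a' * l x₂ c)
    (fun v v' w => by simp [mul_add, add_mul])
    (fun t v w => by simp [mul_smul_comm, smul_mul_assoc])
    (fun v w w' => by simp [mul_add])
    (fun t v w => by simp [mul_smul_comm])

@[simp] lemma bilA_apply (a a' c : A) (x₁ x₂ : H) :
    bilA l a a' c x₁ x₂ = a * l x₁ a' * l x₂ c := rfl

/-- `(z₂,z₃) ↦ b'' * (l (S z₃) b' * l (S z₂) cb)`. -/
noncomputable def bilC (b'' b' cb : A) : H →ₗ[k] H →ₗ[k] A :=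
  LinearMap.mk₂ k (fun z₂ z₃ => b'' * (l (S z₃) b' * l (S z₂) cb))
    (fun v v' w => by simp [mul_add, add_mul])
    (fun t v w => by simp [mul_smul_comm, smul_mul_assoc])
    (fun v w w' => by simp [mul_add, add_mul])
    (fun t v w => by simp [mul_smul_comm, smul_mul_assoc])

@[simp] lemma bilC_apply (b'' b' cb : A) (z₂ z₃ : H) :
    bilC l b'' b' cb z₂ z₃ = b'' * (l (S z₃) b' * l (S z₂) cb) := rfl

end Tri

section Perm

lemma sum_perm6 {M : Type} [AddCommMonoid M] (s1 s2 s3 : Finset ℕ)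
    (t1 t2 t3 : ℕ → Finset ℕ) (F : ℕ → ℕ → ℕ → ℕ → ℕ → ℕ → M) :
    (∑ j ∈ s2, ∑ p ∈ s3, ∑ i ∈ s1, ∑ v ∈ t2 j, ∑ w ∈ t3 p, ∑ q ∈ t1 i, F i q j v p w)
    = ∑ i ∈ s1, ∑ q ∈ t1 i, ∑ j ∈ s2, ∑ v ∈ t2 j, ∑ p ∈ s3, ∑ w ∈ t3 p,
        F i q j v p w := by
  calc (∑ j ∈ s2, ∑ p ∈ s3, ∑ i ∈ s1, ∑ v ∈ t2 j, ∑ w ∈ t3 p, ∑ q ∈ t1 i, F i q j v p w)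
      = ∑ j ∈ s2, ∑ i ∈ s1, ∑ p ∈ s3, ∑ v ∈ t2 j, ∑ w ∈ t3 p, ∑ q ∈ t1 i, F i q j v p w :=
        Finset.sum_congr rfl fun j _ => Finset.sum_comm
    _ = ∑ i ∈ s1, ∑ j ∈ s2, ∑ p ∈ s3, ∑ v ∈ t2 j, ∑ w ∈ t3 p, ∑ q ∈ t1 i, F i q j v p w :=
        Finset.sum_comm
    _ = ∑ i ∈ s1, ∑ j ∈ s2, ∑ v ∈ t2 j, ∑ p ∈ s3, ∑ w ∈ t3 p, ∑ q ∈ t1 i, F i q j v p w :=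
        Finset.sum_congr rfl fun i _ => Finset.sum_congr rfl fun j _ => Finset.sum_comm
    _ = ∑ i ∈ s1, ∑ j ∈ s2, ∑ v ∈ t2 j, ∑ p ∈ s3, ∑ q ∈ t1 i, ∑ w ∈ t3 p, F i q j v p w :=
        Finset.sum_congr rfl fun i _ => Finset.sum_congr rfl fun j _ =>
          Finset.sum_congr rfl fun v _ => Finset.sum_congr rfl fun p _ => Finset.sum_comm
    _ = ∑ i ∈ s1, ∑ j ∈ s2, ∑ v ∈ t2 j, ∑ q ∈ t1 i, ∑ p ∈ s3, ∑ w ∈ t3 p, F i q j v p w :=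
        Finset.sum_congr rfl fun i _ => Finset.sum_congr rfl fun j _ =>
          Finset.sum_congr rfl fun v _ => Finset.sum_comm
    _ = ∑ i ∈ s1, ∑ j ∈ s2, ∑ q ∈ t1 i, ∑ v ∈ t2 j, ∑ p ∈ s3, ∑ w ∈ t3 p, F i q j v p w :=
        Finset.sum_congr rfl fun i _ => Finset.sum_congr rfl fun j _ => Finset.sum_comm
    _ = ∑ i ∈ s1, ∑ q ∈ t1 i, ∑ j ∈ s2, ∑ v ∈ t2 j, ∑ p ∈ s3, ∑ w ∈ t3 p, F i q j v p w :=
        Finset.sum_congr rfl fun i _ => Finset.sum_comm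

end Perm

set_option maxHeartbeats 2000000 in
/-- Kadison's algebra `A^e ◇ H` is an associative unital algebra. -/
theorem stmt_5 (k H A : Type) [Field k] [Ring H] [HopfAlgebra k H]
    [Ring A] [Algebra k A]
    (hbij : Function.Bijective (HopfAlgebra.antipode (R := k) (A := H)))
    (l : H →ₗ[k] A →ₗ[k] A)
    (hl_one : ∀ a : A, l 1 a = a)
    (hl_mul : ∀ (h h' : H) (a : A), l (h * h') a = l h (l h' a))
    (hl_unit : ∀ h : H, l h (1 : A) = Coalgebra.counit (R := k) h • (1 : A))
    (hl_meas : ∀ (h : H) (a b : A) (s : Finset ℕ) (f g : ℕ → H),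
      Coalgebra.comul (R := k) h = ∑ i ∈ s, f i ⊗ₜ[k] g i →
      l h (a * b) = ∑ i ∈ s, l (f i) a * l (g i) b)
    (mulK : ((A ⊗[k] A) ⊗[k] H) →ₗ[k] ((A ⊗[k] A) ⊗[k] H) →ₗ[k] ((A ⊗[k] A) ⊗[k] H))
    (hK : ∀ (a b a' b' : A) (h h' : H) (s t : Finset ℕ) (f g f' g' : ℕ → H),
      Coalgebra.comul (R := k) h = ∑ i ∈ s, f i ⊗ₜ[k] g i →
      Coalgebra.comul (R := k) h' = ∑ j ∈ t, f' j ⊗ₜ[k] g' j →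
      mulK ((a ⊗ₜ[k] b) ⊗ₜ[k] h) ((a' ⊗ₜ[k] b') ⊗ₜ[k] h') =
        ∑ i ∈ s, ∑ j ∈ t,
          ((a * l (f i) a') ⊗ₜ[k] (b' * l (HopfAlgebra.antipode (R := k) (g' j)) b)) ⊗ₜ[k] (g i * f' j))
    :
    (∀ x y z : (A ⊗[k] A) ⊗[k] H, mulK (mulK x y) z = mulK x (mulK y z)) ∧
    (∀ x : (A ⊗[k] A) ⊗[k] H, mulK (((1 : A) ⊗ₜ[k] (1 : A)) ⊗ₜ[k] (1 : H)) x = x) ∧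
    (∀ x : (A ⊗[k] A) ⊗[k] H, mulK x (((1 : A) ⊗ₜ[k] (1 : A)) ⊗ₜ[k] (1 : H)) = x) := by
  classical
  obtain ⟨Δs, Δ1, Δ2, hΔ⟩ :
      ∃ (Δs : H → Finset ℕ) (Δ1 Δ2 : H → ℕ → H),
        ∀ x : H, Coalgebra.comul (R := k) x = ∑ i ∈ Δs x, Δ1 x i ⊗ₜ[k] Δ2 x i := by
    choose Δs Δ1 Δ2 hΔ using fun x : H => exists_nat_rep (Coalgebra.comul (R := k) x)
    exact ⟨Δs, Δ1, Δ2, hΔ⟩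
  have hone : Coalgebra.comul (R := k) (1 : H) =
      ∑ i ∈ ({0} : Finset ℕ), (fun _ => (1 : H)) i ⊗ₜ[k] (fun _ => (1 : H)) i := by
    simp [Bialgebra.comul_one, Algebra.TensorProduct.one_def]
  have key : ∀ (a b a' b' a'' b'' : A) (h h' h'' : H),
      mulK (mulK ((a ⊗ₜ[k] b) ⊗ₜ[k] h) ((a' ⊗ₜ[k] b') ⊗ₜ[k] h')) ((a'' ⊗ₜ[k] b'') ⊗ₜ[k] h'')
      = mulK ((a ⊗ₜ[k] b) ⊗ₜ[k] h)
          (mulK ((a' ⊗ₜ[k] b') ⊗ₜ[k] h') ((a'' ⊗ₜ[k] b'') ⊗ₜ[k] h'')) := by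
    intro a b a' b' a'' b'' h h' h''
    -- ===== left side expansion =====
    have L2 : ∀ i ∈ Δs h, ∀ j ∈ Δs h',
        mulK (((a * l (Δ1 h i) a') ⊗ₜ[k]
            (b' * l (HopfAlgebra.antipode (R := k) (Δ2 h' j)) b)) ⊗ₜ[k] (Δ2 h i * Δ1 h' j))
          ((a'' ⊗ₜ[k] b'') ⊗ₜ[k] h'')
        = ∑ q ∈ Δs (Δ2 h i), ∑ r ∈ Δs (Δ1 h' j), ∑ p ∈ Δs h'', ∑ w ∈ Δs (Δ2 h'' p),
        ((a * l (Δ1 h i) a' * l (Δ1 (Δ2 h i) q) (l (Δ1 (Δ1 h' j) r) a'')) ⊗ₜ[k] (b'' * (l (HopfAlgebra.antipode (R := k) (Δ2 (Δ2 h'' p) w)) b' * l (HopfAlgebra.antipode (R := k) (Δ1 (Δ2 h'' p) w)) (l (HopfAlgebra.antipode (R := k) (Δ2 h' j)) b)))) ⊗ₜ[k] (Δ2 (Δ2 h i) q * Δ2 (Δ1 h' j) r * Δ1 h'' p) := by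
      intro i _ j _
      rw [hK (a * l (Δ1 h i) a') (b' * l (HopfAlgebra.antipode (R := k) (Δ2 h' j)) b) a'' b''
        (Δ2 h i * Δ1 h' j) h''
        ((Δs (Δ2 h i) ×ˢ Δs (Δ1 h' j)).image (fun p => Nat.pair p.1 p.2)) (Δs h'')
        (fun n => Δ1 (Δ2 h i) n.unpair.1 * Δ1 (Δ1 h' j) n.unpair.2)
        (fun n => Δ2 (Δ2 h i) n.unpair.1 * Δ2 (Δ1 h' j) n.unpair.2)
        (Δ1 h'') (Δ2 h'')
        (comul_mul_rep Δs Δ1 Δ2 hΔ (Δ2 h i) (Δ1 h' j)) (hΔ h'')]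
      refine Eq.trans (pair_sum (Δs (Δ2 h i)) (Δs (Δ1 h' j)) (fun q r => ∑ p ∈ Δs h'',
        ((a * l (Δ1 h i) a' * l (Δ1 (Δ2 h i) q * Δ1 (Δ1 h' j) r) a'') ⊗ₜ[k]
          (b'' * l (HopfAlgebra.antipode (R := k) (Δ2 h'' p)) (b' * l (HopfAlgebra.antipode (R := k) (Δ2 h' j)) b))) ⊗ₜ[k]
          (Δ2 (Δ2 h i) q * Δ2 (Δ1 h' j) r * Δ1 h'' p))) ?_
      refine Finset.sum_congr rfl fun q _ => Finset.sum_congr rfl fun r _ =>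
        Finset.sum_congr rfl fun p _ => ?_
      rw [hl_mul, hl_meas (HopfAlgebra.antipode (R := k) (Δ2 h'' p)) b' (l (HopfAlgebra.antipode (R := k) (Δ2 h' j)) b) (Δs (Δ2 h'' p))
        (fun w => HopfAlgebra.antipode (R := k) (Δ2 (Δ2 h'' p) w)) (fun w => HopfAlgebra.antipode (R := k) (Δ1 (Δ2 h'' p) w))
        (comul_S_rep Δs Δ1 Δ2 hΔ (Δ2 h'' p)), Finset.mul_sum, TensorProduct.tmul_sum,
        TensorProduct.sum_tmul]
    have eL : mulK (mulK ((a ⊗ₜ[k] b) ⊗ₜ[k] h) ((a' ⊗ₜ[k] b') ⊗ₜ[k] h'))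
          ((a'' ⊗ₜ[k] b'') ⊗ₜ[k] h'')
        = ∑ i ∈ Δs h, ∑ j ∈ Δs h', ∑ q ∈ Δs (Δ2 h i), ∑ r ∈ Δs (Δ1 h' j), ∑ p ∈ Δs h'', ∑ w ∈ Δs (Δ2 h'' p),
        ((a * l (Δ1 h i) a' * l (Δ1 (Δ2 h i) q) (l (Δ1 (Δ1 h' j) r) a'')) ⊗ₜ[k] (b'' * (l (HopfAlgebra.antipode (R := k) (Δ2 (Δ2 h'' p) w)) b' * l (HopfAlgebra.antipode (R := k) (Δ1 (Δ2 h'' p) w)) (l (HopfAlgebra.antipode (R := k) (Δ2 h' j)) b)))) ⊗ₜ[k] (Δ2 (Δ2 h i) q * Δ2 (Δ1 h' j) r * Δ1 h'' p) := by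
      rw [hK a b a' b' h h' (Δs h) (Δs h') (Δ1 h) (Δ2 h) (Δ1 h') (Δ2 h') (hΔ h) (hΔ h')]
      simp only [map_sum, LinearMap.sum_apply]
      exact Finset.sum_congr rfl fun i hi => Finset.sum_congr rfl fun j hj => L2 i hi j hj
    -- ===== X step =====
    have eX : (∑ i ∈ Δs h, ∑ j ∈ Δs h', ∑ q ∈ Δs (Δ2 h i), ∑ r ∈ Δs (Δ1 h' j), ∑ p ∈ Δs h'', ∑ w ∈ Δs (Δ2 h'' p),
        ((a * l (Δ1 h i) a' * l (Δ1 (Δ2 h i) q) (l (Δ1 (Δ1 h' j) r) a'')) ⊗ₜ[k] (b'' * (l (HopfAlgebra.antipode (R := k) (Δ2 (Δ2 h'' p) w)) b' * l (HopfAlgebra.antipode (R := k) (Δ1 (Δ2 h'' p) w)) (l (HopfAlgebra.antipode (R := k) (Δ2 h' j)) b)))) ⊗ₜ[k] (Δ2 (Δ2 h i) q * Δ2 (Δ1 h' j) r * Δ1 h'' p))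
        = ∑ i ∈ Δs h, ∑ q ∈ Δs (Δ1 h i), ∑ j ∈ Δs h', ∑ r ∈ Δs (Δ1 h' j), ∑ p ∈ Δs h'', ∑ w ∈ Δs (Δ2 h'' p),
        ((a * l (Δ1 (Δ1 h i) q) a' * l (Δ2 (Δ1 h i) q) (l (Δ1 (Δ1 h' j) r) a'')) ⊗ₜ[k] (b'' * (l (HopfAlgebra.antipode (R := k) (Δ2 (Δ2 h'' p) w)) b' * l (HopfAlgebra.antipode (R := k) (Δ1 (Δ2 h'' p) w)) (l (HopfAlgebra.antipode (R := k) (Δ2 h' j)) b)))) ⊗ₜ[k] (Δ2 h i * Δ2 (Δ1 h' j) r * Δ1 h'' p) := by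
      have swap0 : (∑ i ∈ Δs h, ∑ j ∈ Δs h', ∑ q ∈ Δs (Δ2 h i), ∑ r ∈ Δs (Δ1 h' j), ∑ p ∈ Δs h'', ∑ w ∈ Δs (Δ2 h'' p),
        ((a * l (Δ1 h i) a' * l (Δ1 (Δ2 h i) q) (l (Δ1 (Δ1 h' j) r) a'')) ⊗ₜ[k] (b'' * (l (HopfAlgebra.antipode (R := k) (Δ2 (Δ2 h'' p) w)) b' * l (HopfAlgebra.antipode (R := k) (Δ1 (Δ2 h'' p) w)) (l (HopfAlgebra.antipode (R := k) (Δ2 h' j)) b)))) ⊗ₜ[k] (Δ2 (Δ2 h i) q * Δ2 (Δ1 h' j) r * Δ1 h'' p)) = ∑ i ∈ Δs h, ∑ q ∈ Δs (Δ2 h i), ∑ j ∈ Δs h', ∑ r ∈ Δs (Δ1 h' j), ∑ p ∈ Δs h'', ∑ w ∈ Δs (Δ2 h'' p),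
        ((a * l (Δ1 h i) a' * l (Δ1 (Δ2 h i) q) (l (Δ1 (Δ1 h' j) r) a'')) ⊗ₜ[k] (b'' * (l (HopfAlgebra.antipode (R := k) (Δ2 (Δ2 h'' p) w)) b' * l (HopfAlgebra.antipode (R := k) (Δ1 (Δ2 h'' p) w)) (l (HopfAlgebra.antipode (R := k) (Δ2 h' j)) b)))) ⊗ₜ[k] (Δ2 (Δ2 h i) q * Δ2 (Δ1 h' j) r * Δ1 h'' p) :=
        Finset.sum_congr rfl fun i _ => Finset.sum_comm
      rw [swap0]
      set FX : H ⊗[k] (H ⊗[k] H) →ₗ[k] (A ⊗[k] A) ⊗[k] H :=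
        ∑ j ∈ Δs h', ∑ r ∈ Δs (Δ1 h' j), ∑ p ∈ Δs h'', ∑ w ∈ Δs (Δ2 h'' p),
          uc3 (triA (bilA l a a' (l (Δ1 (Δ1 h' j) r) a''))
            (b'' * (l (HopfAlgebra.antipode (R := k) (Δ2 (Δ2 h'' p) w)) b' *
              l (HopfAlgebra.antipode (R := k) (Δ1 (Δ2 h'' p) w)) (l (HopfAlgebra.antipode (R := k) (Δ2 h' j)) b)))
            (LinearMap.mulRight k (Δ1 h'' p) ∘ₗ LinearMap.mulRight k (Δ2 (Δ1 h' j) r)))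
        with hFX
      have hFXapp : ∀ x₁ x₂ x₃ : H, FX (x₁ ⊗ₜ[k] (x₂ ⊗ₜ[k] x₃)) =
          ∑ j ∈ Δs h', ∑ r ∈ Δs (Δ1 h' j), ∑ p ∈ Δs h'', ∑ w ∈ Δs (Δ2 h'' p),
            ((a * l x₁ a' * l x₂ (l (Δ1 (Δ1 h' j) r) a'')) ⊗ₜ[k]
              (b'' * (l (HopfAlgebra.antipode (R := k) (Δ2 (Δ2 h'' p) w)) b' *
                l (HopfAlgebra.antipode (R := k) (Δ1 (Δ2 h'' p) w)) (l (HopfAlgebra.antipode (R := k) (Δ2 h' j)) b)))) ⊗ₜ[k]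
            (x₃ * Δ2 (Δ1 h' j) r * Δ1 h'' p) := by
        intro x₁ x₂ x₃
        simp only [hFX, LinearMap.sum_apply, uc3_tmul, triA_apply, bilA_apply,
          LinearMap.comp_apply, LinearMap.mulRight_apply]
      calc (∑ i ∈ Δs h, ∑ q ∈ Δs (Δ2 h i), ∑ j ∈ Δs h', ∑ r ∈ Δs (Δ1 h' j), ∑ p ∈ Δs h'', ∑ w ∈ Δs (Δ2 h'' p),
        ((a * l (Δ1 h i) a' * l (Δ1 (Δ2 h i) q) (l (Δ1 (Δ1 h' j) r) a'')) ⊗ₜ[k] (b'' * (l (HopfAlgebra.antipode (R := k) (Δ2 (Δ2 h'' p) w)) b' * l (HopfAlgebra.antipode (R := k) (Δ1 (Δ2 h'' p) w)) (l (HopfAlgebra.antipode (R := k) (Δ2 h' j)) b)))) ⊗ₜ[k] (Δ2 (Δ2 h i) q * Δ2 (Δ1 h' j) r * Δ1 h'' p))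
          = ∑ i ∈ Δs h, ∑ q ∈ Δs (Δ2 h i),
              FX (Δ1 h i ⊗ₜ[k] (Δ1 (Δ2 h i) q ⊗ₜ[k] Δ2 (Δ2 h i) q)) := by
            exact Finset.sum_congr rfl fun i _ => Finset.sum_congr rfl fun q _ =>
              (hFXapp _ _ _).symm
        _ = FX (∑ i ∈ Δs h, ∑ q ∈ Δs (Δ2 h i),
              Δ1 h i ⊗ₜ[k] (Δ1 (Δ2 h i) q ⊗ₜ[k] Δ2 (Δ2 h i) q)) := by
            simp only [map_sum]
        _ = FX (∑ i ∈ Δs h, ∑ q ∈ Δs (Δ1 h i),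
              Δ1 (Δ1 h i) q ⊗ₜ[k] (Δ2 (Δ1 h i) q ⊗ₜ[k] Δ2 h i)) := by
            rw [coassoc_rep Δs Δ1 Δ2 hΔ h]
        _ = ∑ i ∈ Δs h, ∑ q ∈ Δs (Δ1 h i),
              FX (Δ1 (Δ1 h i) q ⊗ₜ[k] (Δ2 (Δ1 h i) q ⊗ₜ[k] Δ2 h i)) := by
            simp only [map_sum]
        _ = ∑ i ∈ Δs h, ∑ q ∈ Δs (Δ1 h i), ∑ j ∈ Δs h', ∑ r ∈ Δs (Δ1 h' j), ∑ p ∈ Δs h'', ∑ w ∈ Δs (Δ2 h'' p),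
        ((a * l (Δ1 (Δ1 h i) q) a' * l (Δ2 (Δ1 h i) q) (l (Δ1 (Δ1 h' j) r) a'')) ⊗ₜ[k] (b'' * (l (HopfAlgebra.antipode (R := k) (Δ2 (Δ2 h'' p) w)) b' * l (HopfAlgebra.antipode (R := k) (Δ1 (Δ2 h'' p) w)) (l (HopfAlgebra.antipode (R := k) (Δ2 h' j)) b)))) ⊗ₜ[k] (Δ2 h i * Δ2 (Δ1 h' j) r * Δ1 h'' p) := by
            exact Finset.sum_congr rfl fun i _ => Finset.sum_congr rfl fun q _ =>
              hFXapp _ _ _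
    -- ===== Y step =====
    have eY : (∑ i ∈ Δs h, ∑ q ∈ Δs (Δ1 h i), ∑ j ∈ Δs h', ∑ r ∈ Δs (Δ1 h' j), ∑ p ∈ Δs h'', ∑ w ∈ Δs (Δ2 h'' p),
        ((a * l (Δ1 (Δ1 h i) q) a' * l (Δ2 (Δ1 h i) q) (l (Δ1 (Δ1 h' j) r) a'')) ⊗ₜ[k] (b'' * (l (HopfAlgebra.antipode (R := k) (Δ2 (Δ2 h'' p) w)) b' * l (HopfAlgebra.antipode (R := k) (Δ1 (Δ2 h'' p) w)) (l (HopfAlgebra.antipode (R := k) (Δ2 h' j)) b)))) ⊗ₜ[k] (Δ2 h i * Δ2 (Δ1 h' j) r * Δ1 h'' p))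
        = ∑ i ∈ Δs h, ∑ q ∈ Δs (Δ1 h i), ∑ j ∈ Δs h', ∑ v ∈ Δs (Δ2 h' j), ∑ p ∈ Δs h'', ∑ w ∈ Δs (Δ2 h'' p),
        ((a * l (Δ1 (Δ1 h i) q) a' * l (Δ2 (Δ1 h i) q) (l (Δ1 h' j) a'')) ⊗ₜ[k] (b'' * (l (HopfAlgebra.antipode (R := k) (Δ2 (Δ2 h'' p) w)) b' * l (HopfAlgebra.antipode (R := k) (Δ1 (Δ2 h'' p) w)) (l (HopfAlgebra.antipode (R := k) (Δ2 (Δ2 h' j) v)) b)))) ⊗ₜ[k] (Δ2 h i * Δ1 (Δ2 h' j) v * Δ1 h'' p) := by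
      refine Finset.sum_congr rfl fun i _ => Finset.sum_congr rfl fun q _ => ?_
      set FY : H ⊗[k] (H ⊗[k] H) →ₗ[k] (A ⊗[k] A) ⊗[k] H :=
        ∑ p ∈ Δs h'', ∑ w ∈ Δs (Δ2 h'' p),
          uc3 (triB
            (LinearMap.mulLeft k (a * l (Δ1 (Δ1 h i) q) a') ∘ₗ l (Δ2 (Δ1 h i) q) ∘ₗ
              l.flip a'')
            (LinearMap.mulLeft k b'' ∘ₗ
              LinearMap.mulLeft k (l (HopfAlgebra.antipode (R := k) (Δ2 (Δ2 h'' p) w)) b') ∘ₗ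
              l (HopfAlgebra.antipode (R := k) (Δ1 (Δ2 h'' p) w)) ∘ₗ l.flip b ∘ₗ HopfAlgebra.antipode (R := k))
            (LinearMap.mulRight k (Δ1 h'' p) ∘ₗ LinearMap.mulLeft k (Δ2 h i)))
        with hFY
      have hFYapp : ∀ y₁ y₂ y₃ : H, FY (y₁ ⊗ₜ[k] (y₂ ⊗ₜ[k] y₃)) =
          ∑ p ∈ Δs h'', ∑ w ∈ Δs (Δ2 h'' p),
            ((a * l (Δ1 (Δ1 h i) q) a' * l (Δ2 (Δ1 h i) q) (l y₁ a'')) ⊗ₜ[k]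
              (b'' * (l (HopfAlgebra.antipode (R := k) (Δ2 (Δ2 h'' p) w)) b' *
                l (HopfAlgebra.antipode (R := k) (Δ1 (Δ2 h'' p) w)) (l (HopfAlgebra.antipode (R := k) y₃) b)))) ⊗ₜ[k]
            (Δ2 h i * y₂ * Δ1 h'' p) := by
        intro y₁ y₂ y₃
        simp only [hFY, LinearMap.sum_apply, uc3_tmul, triB_apply, LinearMap.comp_apply,
          LinearMap.mulLeft_apply, LinearMap.mulRight_apply, LinearMap.flip_apply]
      calc (∑ j ∈ Δs h', ∑ r ∈ Δs (Δ1 h' j), ∑ p ∈ Δs h'', ∑ w ∈ Δs (Δ2 h'' p),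
        ((a * l (Δ1 (Δ1 h i) q) a' * l (Δ2 (Δ1 h i) q) (l (Δ1 (Δ1 h' j) r) a'')) ⊗ₜ[k] (b'' * (l (HopfAlgebra.antipode (R := k) (Δ2 (Δ2 h'' p) w)) b' * l (HopfAlgebra.antipode (R := k) (Δ1 (Δ2 h'' p) w)) (l (HopfAlgebra.antipode (R := k) (Δ2 h' j)) b)))) ⊗ₜ[k] (Δ2 h i * Δ2 (Δ1 h' j) r * Δ1 h'' p))
          = ∑ j ∈ Δs h', ∑ r ∈ Δs (Δ1 h' j),
              FY (Δ1 (Δ1 h' j) r ⊗ₜ[k] (Δ2 (Δ1 h' j) r ⊗ₜ[k] Δ2 h' j)) := by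
            exact Finset.sum_congr rfl fun j _ => Finset.sum_congr rfl fun r _ =>
              (hFYapp _ _ _).symm
        _ = FY (∑ j ∈ Δs h', ∑ r ∈ Δs (Δ1 h' j),
              Δ1 (Δ1 h' j) r ⊗ₜ[k] (Δ2 (Δ1 h' j) r ⊗ₜ[k] Δ2 h' j)) := by
            simp only [map_sum]
        _ = FY (∑ j ∈ Δs h', ∑ v ∈ Δs (Δ2 h' j),
              Δ1 h' j ⊗ₜ[k] (Δ1 (Δ2 h' j) v ⊗ₜ[k] Δ2 (Δ2 h' j) v)) := by
            rw [coassoc_rep Δs Δ1 Δ2 hΔ h']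
        _ = ∑ j ∈ Δs h', ∑ v ∈ Δs (Δ2 h' j),
              FY (Δ1 h' j ⊗ₜ[k] (Δ1 (Δ2 h' j) v ⊗ₜ[k] Δ2 (Δ2 h' j) v)) := by
            simp only [map_sum]
        _ = ∑ j ∈ Δs h', ∑ v ∈ Δs (Δ2 h' j), ∑ p ∈ Δs h'', ∑ w ∈ Δs (Δ2 h'' p),
              ((a * l (Δ1 (Δ1 h i) q) a' * l (Δ2 (Δ1 h i) q) (l (Δ1 h' j) a'')) ⊗ₜ[k] (b'' * (l (HopfAlgebra.antipode (R := k) (Δ2 (Δ2 h'' p) w)) b' * l (HopfAlgebra.antipode (R := k) (Δ1 (Δ2 h'' p) w)) (l (HopfAlgebra.antipode (R := k) (Δ2 (Δ2 h' j) v)) b)))) ⊗ₜ[k] (Δ2 h i * Δ1 (Δ2 h' j) v * Δ1 h'' p) := by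
            exact Finset.sum_congr rfl fun j _ => Finset.sum_congr rfl fun v _ =>
              hFYapp _ _ _
    -- ===== Z step =====
    have eZ : (∑ i ∈ Δs h, ∑ q ∈ Δs (Δ1 h i), ∑ j ∈ Δs h', ∑ v ∈ Δs (Δ2 h' j), ∑ p ∈ Δs h'', ∑ w ∈ Δs (Δ2 h'' p),
        ((a * l (Δ1 (Δ1 h i) q) a' * l (Δ2 (Δ1 h i) q) (l (Δ1 h' j) a'')) ⊗ₜ[k] (b'' * (l (HopfAlgebra.antipode (R := k) (Δ2 (Δ2 h'' p) w)) b' * l (HopfAlgebra.antipode (R := k) (Δ1 (Δ2 h'' p) w)) (l (HopfAlgebra.antipode (R := k) (Δ2 (Δ2 h' j) v)) b)))) ⊗ₜ[k] (Δ2 h i * Δ1 (Δ2 h' j) v * Δ1 h'' p))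
        = ∑ i ∈ Δs h, ∑ q ∈ Δs (Δ1 h i), ∑ j ∈ Δs h', ∑ v ∈ Δs (Δ2 h' j), ∑ p ∈ Δs h'', ∑ w ∈ Δs (Δ1 h'' p),
        ((a * l (Δ1 (Δ1 h i) q) a' * l (Δ2 (Δ1 h i) q) (l (Δ1 h' j) a'')) ⊗ₜ[k] (b'' * (l (HopfAlgebra.antipode (R := k) (Δ2 h'' p)) b' * l (HopfAlgebra.antipode (R := k) (Δ2 (Δ1 h'' p) w)) (l (HopfAlgebra.antipode (R := k) (Δ2 (Δ2 h' j) v)) b)))) ⊗ₜ[k] (Δ2 h i * Δ1 (Δ2 h' j) v * Δ1 (Δ1 h'' p) w) := by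
      refine Finset.sum_congr rfl fun i _ => Finset.sum_congr rfl fun q _ =>
        Finset.sum_congr rfl fun j _ => Finset.sum_congr rfl fun v _ => ?_
      set FZ : H ⊗[k] (H ⊗[k] H) →ₗ[k] (A ⊗[k] A) ⊗[k] H :=
        uc3 (triC (a * l (Δ1 (Δ1 h i) q) a' * l (Δ2 (Δ1 h i) q) (l (Δ1 h' j) a''))
          (bilC l b'' b' (l (HopfAlgebra.antipode (R := k) (Δ2 (Δ2 h' j) v)) b))
          (LinearMap.mulLeft k (Δ2 h i * Δ1 (Δ2 h' j) v))) with hFZ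
      have hFZapp : ∀ z₁ z₂ z₃ : H, FZ (z₁ ⊗ₜ[k] (z₂ ⊗ₜ[k] z₃)) =
          ((a * l (Δ1 (Δ1 h i) q) a' * l (Δ2 (Δ1 h i) q) (l (Δ1 h' j) a'')) ⊗ₜ[k]
            (b'' * (l (HopfAlgebra.antipode (R := k) z₃) b' * l (HopfAlgebra.antipode (R := k) z₂) (l (HopfAlgebra.antipode (R := k) (Δ2 (Δ2 h' j) v)) b)))) ⊗ₜ[k]
          (Δ2 h i * Δ1 (Δ2 h' j) v * z₁) := by
        intro z₁ z₂ z₃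
        simp only [hFZ, uc3_tmul, triC_apply, bilC_apply, LinearMap.mulLeft_apply]
      calc (∑ p ∈ Δs h'', ∑ w ∈ Δs (Δ2 h'' p), ((a * l (Δ1 (Δ1 h i) q) a' * l (Δ2 (Δ1 h i) q) (l (Δ1 h' j) a'')) ⊗ₜ[k] (b'' * (l (HopfAlgebra.antipode (R := k) (Δ2 (Δ2 h'' p) w)) b' * l (HopfAlgebra.antipode (R := k) (Δ1 (Δ2 h'' p) w)) (l (HopfAlgebra.antipode (R := k) (Δ2 (Δ2 h' j) v)) b)))) ⊗ₜ[k] (Δ2 h i * Δ1 (Δ2 h' j) v * Δ1 h'' p))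
          = ∑ p ∈ Δs h'', ∑ w ∈ Δs (Δ2 h'' p),
              FZ (Δ1 h'' p ⊗ₜ[k] (Δ1 (Δ2 h'' p) w ⊗ₜ[k] Δ2 (Δ2 h'' p) w)) := by
            exact Finset.sum_congr rfl fun p _ => Finset.sum_congr rfl fun w _ =>
              (hFZapp _ _ _).symm
        _ = FZ (∑ p ∈ Δs h'', ∑ w ∈ Δs (Δ2 h'' p),
              Δ1 h'' p ⊗ₜ[k] (Δ1 (Δ2 h'' p) w ⊗ₜ[k] Δ2 (Δ2 h'' p) w)) := by
            simp only [map_sum]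
        _ = FZ (∑ p ∈ Δs h'', ∑ w ∈ Δs (Δ1 h'' p),
              Δ1 (Δ1 h'' p) w ⊗ₜ[k] (Δ2 (Δ1 h'' p) w ⊗ₜ[k] Δ2 h'' p)) := by
            rw [coassoc_rep Δs Δ1 Δ2 hΔ h'']
        _ = ∑ p ∈ Δs h'', ∑ w ∈ Δs (Δ1 h'' p),
              FZ (Δ1 (Δ1 h'' p) w ⊗ₜ[k] (Δ2 (Δ1 h'' p) w ⊗ₜ[k] Δ2 h'' p)) := by
            simp only [map_sum]
        _ = ∑ p ∈ Δs h'', ∑ w ∈ Δs (Δ1 h'' p), ((a * l (Δ1 (Δ1 h i) q) a' * l (Δ2 (Δ1 h i) q) (l (Δ1 h' j) a'')) ⊗ₜ[k] (b'' * (l (HopfAlgebra.antipode (R := k) (Δ2 h'' p)) b' * l (HopfAlgebra.antipode (R := k) (Δ2 (Δ1 h'' p) w)) (l (HopfAlgebra.antipode (R := k) (Δ2 (Δ2 h' j) v)) b)))) ⊗ₜ[k] (Δ2 h i * Δ1 (Δ2 h' j) v * Δ1 (Δ1 h'' p) w) := by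
            exact Finset.sum_congr rfl fun p _ => Finset.sum_congr rfl fun w _ =>
              hFZapp _ _ _
    -- ===== right side expansion =====
    have R2 : ∀ j ∈ Δs h', ∀ p ∈ Δs h'',
        mulK ((a ⊗ₜ[k] b) ⊗ₜ[k] h)
          (((a' * l (Δ1 h' j) a'') ⊗ₜ[k] (b'' * l (HopfAlgebra.antipode (R := k) (Δ2 h'' p)) b')) ⊗ₜ[k]
            (Δ2 h' j * Δ1 h'' p))
        = ∑ i ∈ Δs h, ∑ v ∈ Δs (Δ2 h' j), ∑ w ∈ Δs (Δ1 h'' p), ∑ q ∈ Δs (Δ1 h i),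
        ((a * (l (Δ1 (Δ1 h i) q) a' * l (Δ2 (Δ1 h i) q) (l (Δ1 h' j) a''))) ⊗ₜ[k] ((b'' * l (HopfAlgebra.antipode (R := k) (Δ2 h'' p)) b') * l (HopfAlgebra.antipode (R := k) (Δ2 (Δ1 h'' p) w)) (l (HopfAlgebra.antipode (R := k) (Δ2 (Δ2 h' j) v)) b))) ⊗ₜ[k] (Δ2 h i * (Δ1 (Δ2 h' j) v * Δ1 (Δ1 h'' p) w)) := by
      intro j _ p _
      rw [hK a b (a' * l (Δ1 h' j) a'') (b'' * l (HopfAlgebra.antipode (R := k) (Δ2 h'' p)) b')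
        h (Δ2 h' j * Δ1 h'' p) (Δs h)
        ((Δs (Δ2 h' j) ×ˢ Δs (Δ1 h'' p)).image (fun n => Nat.pair n.1 n.2))
        (Δ1 h) (Δ2 h)
        (fun n => Δ1 (Δ2 h' j) n.unpair.1 * Δ1 (Δ1 h'' p) n.unpair.2)
        (fun n => Δ2 (Δ2 h' j) n.unpair.1 * Δ2 (Δ1 h'' p) n.unpair.2)
        (hΔ h) (comul_mul_rep Δs Δ1 Δ2 hΔ (Δ2 h' j) (Δ1 h'' p))]
      refine Finset.sum_congr rfl fun i _ => ?_
      refine Eq.trans (pair_sum (Δs (Δ2 h' j)) (Δs (Δ1 h'' p)) (fun v w =>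
        ((a * l (Δ1 h i) (a' * l (Δ1 h' j) a'')) ⊗ₜ[k]
          ((b'' * l (HopfAlgebra.antipode (R := k) (Δ2 h'' p)) b') *
            l (HopfAlgebra.antipode (R := k) (Δ2 (Δ2 h' j) v * Δ2 (Δ1 h'' p) w)) b)) ⊗ₜ[k]
        (Δ2 h i * (Δ1 (Δ2 h' j) v * Δ1 (Δ1 h'' p) w)))) ?_
      refine Finset.sum_congr rfl fun v _ => Finset.sum_congr rfl fun w _ => ?_
      rw [S_mul, hl_mul, hl_meas (Δ1 h i) a' (l (Δ1 h' j) a'') (Δs (Δ1 h i))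
        (Δ1 (Δ1 h i)) (Δ2 (Δ1 h i)) (hΔ (Δ1 h i)), Finset.mul_sum,
        TensorProduct.sum_tmul, TensorProduct.sum_tmul]
    have eR : mulK ((a ⊗ₜ[k] b) ⊗ₜ[k] h)
          (mulK ((a' ⊗ₜ[k] b') ⊗ₜ[k] h') ((a'' ⊗ₜ[k] b'') ⊗ₜ[k] h''))
        = ∑ j ∈ Δs h', ∑ p ∈ Δs h'', ∑ i ∈ Δs h, ∑ v ∈ Δs (Δ2 h' j), ∑ w ∈ Δs (Δ1 h'' p), ∑ q ∈ Δs (Δ1 h i),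
        ((a * (l (Δ1 (Δ1 h i) q) a' * l (Δ2 (Δ1 h i) q) (l (Δ1 h' j) a''))) ⊗ₜ[k] ((b'' * l (HopfAlgebra.antipode (R := k) (Δ2 h'' p)) b') * l (HopfAlgebra.antipode (R := k) (Δ2 (Δ1 h'' p) w)) (l (HopfAlgebra.antipode (R := k) (Δ2 (Δ2 h' j) v)) b))) ⊗ₜ[k] (Δ2 h i * (Δ1 (Δ2 h' j) v * Δ1 (Δ1 h'' p) w)) := by
      rw [hK a' b' a'' b'' h' h'' (Δs h') (Δs h'') (Δ1 h') (Δ2 h') (Δ1 h'') (Δ2 h'')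
        (hΔ h') (hΔ h'')]
      simp only [map_sum]
      exact Finset.sum_congr rfl fun j hj => Finset.sum_congr rfl fun p hp => R2 j hj p hp
    -- ===== permutation and final matching =====
    have ePerm : (∑ j ∈ Δs h', ∑ p ∈ Δs h'', ∑ i ∈ Δs h, ∑ v ∈ Δs (Δ2 h' j), ∑ w ∈ Δs (Δ1 h'' p), ∑ q ∈ Δs (Δ1 h i),
        ((a * (l (Δ1 (Δ1 h i) q) a' * l (Δ2 (Δ1 h i) q) (l (Δ1 h' j) a''))) ⊗ₜ[k] ((b'' * l (HopfAlgebra.antipode (R := k) (Δ2 h'' p)) b') * l (HopfAlgebra.antipode (R := k) (Δ2 (Δ1 h'' p) w)) (l (HopfAlgebra.antipode (R := k) (Δ2 (Δ2 h' j) v)) b))) ⊗ₜ[k] (Δ2 h i * (Δ1 (Δ2 h' j) v * Δ1 (Δ1 h'' p) w))) = ∑ i ∈ Δs h, ∑ q ∈ Δs (Δ1 h i), ∑ j ∈ Δs h', ∑ v ∈ Δs (Δ2 h' j), ∑ p ∈ Δs h'', ∑ w ∈ Δs (Δ1 h'' p),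
        ((a * (l (Δ1 (Δ1 h i) q) a' * l (Δ2 (Δ1 h i) q) (l (Δ1 h' j) a''))) ⊗ₜ[k] ((b'' * l (HopfAlgebra.antipode (R := k) (Δ2 h'' p)) b') * l (HopfAlgebra.antipode (R := k) (Δ2 (Δ1 h'' p) w)) (l (HopfAlgebra.antipode (R := k) (Δ2 (Δ2 h' j) v)) b))) ⊗ₜ[k] (Δ2 h i * (Δ1 (Δ2 h' j) v * Δ1 (Δ1 h'' p) w)) :=
      sum_perm6 (Δs h) (Δs h') (Δs h'') (fun i => Δs (Δ1 h i)) (fun j => Δs (Δ2 h' j))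
        (fun p => Δs (Δ1 h'' p)) _
    have eFin : (∑ i ∈ Δs h, ∑ q ∈ Δs (Δ1 h i), ∑ j ∈ Δs h', ∑ v ∈ Δs (Δ2 h' j), ∑ p ∈ Δs h'', ∑ w ∈ Δs (Δ1 h'' p),
        ((a * l (Δ1 (Δ1 h i) q) a' * l (Δ2 (Δ1 h i) q) (l (Δ1 h' j) a'')) ⊗ₜ[k] (b'' * (l (HopfAlgebra.antipode (R := k) (Δ2 h'' p)) b' * l (HopfAlgebra.antipode (R := k) (Δ2 (Δ1 h'' p) w)) (l (HopfAlgebra.antipode (R := k) (Δ2 (Δ2 h' j) v)) b)))) ⊗ₜ[k] (Δ2 h i * Δ1 (Δ2 h' j) v * Δ1 (Δ1 h'' p) w)) = ∑ i ∈ Δs h, ∑ q ∈ Δs (Δ1 h i), ∑ j ∈ Δs h', ∑ v ∈ Δs (Δ2 h' j), ∑ p ∈ Δs h'', ∑ w ∈ Δs (Δ1 h'' p),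
        ((a * (l (Δ1 (Δ1 h i) q) a' * l (Δ2 (Δ1 h i) q) (l (Δ1 h' j) a''))) ⊗ₜ[k] ((b'' * l (HopfAlgebra.antipode (R := k) (Δ2 h'' p)) b') * l (HopfAlgebra.antipode (R := k) (Δ2 (Δ1 h'' p) w)) (l (HopfAlgebra.antipode (R := k) (Δ2 (Δ2 h' j) v)) b))) ⊗ₜ[k] (Δ2 h i * (Δ1 (Δ2 h' j) v * Δ1 (Δ1 h'' p) w)) := by
      refine Finset.sum_congr rfl fun i _ => Finset.sum_congr rfl fun q _ =>
        Finset.sum_congr rfl fun j _ => Finset.sum_congr rfl fun v _ =>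
        Finset.sum_congr rfl fun p _ => Finset.sum_congr rfl fun w _ => ?_
      simp only [mul_assoc]
    rw [eL, eX, eY, eZ, eFin, eR, ePerm]

  refine ⟨?_, ?_, ?_⟩
  · -- associativity
    intro x y z
    induction x using TensorProduct.induction_on with
    | zero => simp
    | add u v hu hv => simp only [map_add, LinearMap.add_apply, hu, hv]
    | tmul mx hx =>
      induction mx using TensorProduct.induction_on with
      | zero => simp [TensorProduct.zero_tmul]
      | add u v hu hv => simp only [TensorProduct.add_tmul, map_add, LinearMap.add_apply, hu, hv]
      | tmul a b =>
        induction y using TensorProduct.induction_on with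
        | zero => simp
        | add u v hu hv => simp only [map_add, LinearMap.add_apply, hu, hv]
        | tmul my hy =>
          induction my using TensorProduct.induction_on with
          | zero => simp [TensorProduct.zero_tmul]
          | add u v hu hv =>
            simp only [TensorProduct.add_tmul, map_add, LinearMap.add_apply, hu, hv]
          | tmul a' b' =>
            induction z using TensorProduct.induction_on with
            | zero => simp
            | add u v hu hv => simp only [map_add, hu, hv]
            | tmul mz hz =>
              induction mz using TensorProduct.induction_on with
              | zero => simp [TensorProduct.zero_tmul]
              | add u v hu hv =>
                simp only [TensorProduct.add_tmul, map_add, hu, hv]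
              | tmul a'' b'' => exact key a b a' b' a'' b'' hx hy hz
  · -- left unit
    have pure : ∀ (a' b' : A) (h' : H),
        mulK (((1 : A) ⊗ₜ[k] (1 : A)) ⊗ₜ[k] (1 : H)) ((a' ⊗ₜ[k] b') ⊗ₜ[k] h')
          = (a' ⊗ₜ[k] b') ⊗ₜ[k] h' := by
      intro a' b' h'
      rw [hK 1 1 a' b' 1 h' {0} (Δs h') _ _ (Δ1 h') (Δ2 h') hone (hΔ h'), Finset.sum_singleton]
      have e : ∀ j ∈ Δs h',
          ((1 * l ((fun _ => (1 : H)) 0) a') ⊗ₜ[k]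
            (b' * l (HopfAlgebra.antipode (R := k) (Δ2 h' j)) 1)) ⊗ₜ[k]
            ((fun _ => (1 : H)) 0 * Δ1 h' j)
          = (a' ⊗ₜ[k] b') ⊗ₜ[k] (Coalgebra.counit (R := k) (Δ2 h' j) • Δ1 h' j) := by
        intro j _
        simp only [one_mul, hl_one, hl_unit, counit_S]
        rw [mul_smul_comm, mul_one, TensorProduct.tmul_smul, TensorProduct.smul_tmul]
      rw [Finset.sum_congr rfl e, ← TensorProduct.tmul_sum,
        counit_right_rep Δs Δ1 Δ2 hΔ h']
    intro x
    induction x using TensorProduct.induction_on with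
    | zero => simp
    | add u v hu hv => simp only [map_add, hu, hv]
    | tmul m h' =>
      induction m using TensorProduct.induction_on with
      | zero => simp [TensorProduct.zero_tmul]
      | add u v hu hv => simp only [TensorProduct.add_tmul, map_add, hu, hv]
      | tmul a' b' => exact pure a' b' h'
  · -- right unit
    have pure : ∀ (a b : A) (h : H),
        mulK ((a ⊗ₜ[k] b) ⊗ₜ[k] h) (((1 : A) ⊗ₜ[k] (1 : A)) ⊗ₜ[k] (1 : H))
          = (a ⊗ₜ[k] b) ⊗ₜ[k] h := by
      intro a b h
      rw [hK a b 1 1 h 1 (Δs h) {0} (Δ1 h) (Δ2 h) _ _ (hΔ h) hone]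
      have e : ∀ i ∈ Δs h, (∑ j ∈ ({0} : Finset ℕ),
          ((a * l (Δ1 h i) 1) ⊗ₜ[k]
            ((1 : A) * l (HopfAlgebra.antipode (R := k) ((fun _ => (1 : H)) j)) b)) ⊗ₜ[k]
            (Δ2 h i * (fun _ => (1 : H)) j))
          = (a ⊗ₜ[k] b) ⊗ₜ[k] (Coalgebra.counit (R := k) (Δ1 h i) • Δ2 h i) := by
        intro i _
        rw [Finset.sum_singleton]
        simp only [hl_unit, S_one, hl_one, one_mul, mul_one]
        rw [mul_smul_comm, mul_one, ← TensorProduct.smul_tmul', TensorProduct.smul_tmul]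
      rw [Finset.sum_congr rfl e, ← TensorProduct.tmul_sum,
        counit_left_rep Δs Δ1 Δ2 hΔ h]
    intro x
    induction x using TensorProduct.induction_on with
    | zero => simp
    | add u v hu hv => simp only [map_add, LinearMap.add_apply, hu, hv]
    | tmul m h =>
      induction m using TensorProduct.induction_on with
      | zero => simp [TensorProduct.zero_tmul]
      | add u v hu hv => simp only [TensorProduct.add_tmul, map_add, LinearMap.add_apply, hu, hv]
      | tmul a b => exact pure a b h
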